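/- Let Sk be a finite connected bipartite ribbon graph in which every black vertex has valency 1 or 3, every white vertex has valency 1 or 2, with n_• monovalent black vertices, n_∘ monovalent white vertices, and n_i regions of width i for i ≥ 1. Then Sk has genus zero (its minimal supporting surface is a sphere) if and only if 3n_∘ + 4n_• + Σ_{i≥1} (6 - i)·n_i = 12. -/

import Mathlib

/-- An (abstract) finite skeleton: a finite connected bipartite ribbon graph whose
black vertices have valency 3 or 1 and whose white vertices have valency 2 or 1.
Combinatorially: a finite edge set `E` with permutations `x` (rotation around black
vertices, `x³ = 1`) and `y` (rotation around white vertices, `y² = 1`) generating a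
transitive action. Black vertices are the orbits of `x`, white vertices the orbits
of `y`, and regions the orbits of `x * y`. -/
structure Skeleton where
  E : Type
  [fintypeE : Fintype E]
  [decEqE : DecidableEq E]
  x : Equiv.Perm E
  y : Equiv.Perm E
  hx : x ^ 3 = 1
  hy : y ^ 2 = 1
  conn : ∀ e e' : E, ∃ g ∈ Subgroup.closure ({x, y} : Set (Equiv.Perm E)), g e = e'

attribute [instance] Skeleton.fintypeE Skeleton.decEqE

/-- The number of fixed points of a permutation (= number of its orbits of size 1). -/
def numFixed {E : Type} [Fintype E] [DecidableEq E] (g : Equiv.Perm E) : ℕ :=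
  Fintype.card {e : E // g e = e}

/-- The number of orbits of a permutation: the nontrivial cycles together with the
fixed points. -/
def numOrbits {E : Type} [Fintype E] [DecidableEq E] (g : Equiv.Perm E) : ℕ :=
  Multiset.card g.cycleType + numFixed g

/-- The number of orbits of a permutation having exactly `i` elements. -/
def numOrbitsOfSize {E : Type} [Fintype E] [DecidableEq E] (g : Equiv.Perm E) (i : ℕ) : ℕ :=
  if i = 1 then numFixed g else Multiset.count i g.cycleType

/-- A skeleton has genus zero iff its Euler characteristic
`V - E + F = (#black vertices + #white vertices) - #edges + #regions` equals 2,
i.e. its minimal supporting surface is a sphere. -/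
def Skeleton.GenusZero (S : Skeleton) : Prop :=
  numOrbits S.x + numOrbits S.y + numOrbits (S.x * S.y) = Fintype.card S.E + 2

section Aux

variable {E : Type} [Fintype E] [DecidableEq E]

/-- Sum of a multiset of naturals via counts. -/
lemma multiset_sum_eq_sum_count (s : Multiset ℕ) :
    s.sum = ∑ a ∈ s.toFinset, s.count a * a := by
  conv_lhs => rw [← Multiset.toFinset_sum_count_nsmul_eq s]
  rw [← Multiset.coe_sumAddMonoidHom, map_sum]
  simp [Multiset.coe_sumAddMonoidHom, Multiset.nsmul_singleton, Multiset.sum_replicate,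
    mul_comm]

lemma numFixed_add_support (g : Equiv.Perm E) :
    numFixed g + g.support.card = Fintype.card E := by
  classical
  rw [numFixed, Fintype.card_subtype]
  rw [show g.support = Finset.univ.filter (fun e => ¬ g e = e) by
    ext e; simp [Equiv.Perm.mem_support]]
  exact Finset.card_filter_add_card_filter_not _

lemma mem_cycleType_dvd {g : Equiv.Perm E} {n : ℕ} (h : g ^ n = 1)
    {a : ℕ} (ha : a ∈ g.cycleType) : a ∣ n := by
  have h1 : a ∣ g.cycleType.lcm := Multiset.dvd_lcm ha
  rw [Equiv.Perm.lcm_cycleType] at h1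
  exact h1.trans (orderOf_dvd_of_pow_eq_one h)

lemma card_eq_of_pow_three {g : Equiv.Perm E} (h : g ^ 3 = 1) :
    Fintype.card E = 3 * Multiset.card g.cycleType + numFixed g := by
  have hrep : g.cycleType = Multiset.replicate (Multiset.card g.cycleType) 3 := by
    apply Multiset.eq_replicate_card.2
    intro a ha
    have h2 := Equiv.Perm.two_le_of_mem_cycleType ha
    have h3 := mem_cycleType_dvd h ha
    have h4 : a ≤ 3 := Nat.le_of_dvd (by norm_num) h3
    interval_cases a
    · exact absurd h3 (by norm_num)
    · rfl
  have hs := g.sum_cycleType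
  rw [hrep] at hs
  simp [Multiset.sum_replicate] at hs
  have := numFixed_add_support g
  rw [hrep]
  simp
  omega

lemma card_eq_of_pow_two {g : Equiv.Perm E} (h : g ^ 2 = 1) :
    Fintype.card E = 2 * Multiset.card g.cycleType + numFixed g := by
  have hrep : g.cycleType = Multiset.replicate (Multiset.card g.cycleType) 2 := by
    apply Multiset.eq_replicate_card.2
    intro a ha
    have h2 := Equiv.Perm.two_le_of_mem_cycleType ha
    have h3 := mem_cycleType_dvd h ha
    have h4 : a ≤ 2 := Nat.le_of_dvd (by norm_num) h3
    omega
  have hs := g.sum_cycleType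
  rw [hrep] at hs
  simp [Multiset.sum_replicate] at hs
  have := numFixed_add_support g
  rw [hrep]
  simp
  omega

lemma cycleType_toFinset_subset (g : Equiv.Perm E) :
    g.cycleType.toFinset ⊆ Finset.Icc 2 (Fintype.card E) := by
  intro a ha
  rw [Multiset.mem_toFinset] at ha
  rw [Finset.mem_Icc]
  refine ⟨Equiv.Perm.two_le_of_mem_cycleType ha, ?_⟩
  calc a ≤ g.cycleType.sum := Multiset.single_le_sum (fun x _ => Nat.zero_le x) _ ha
    _ = g.support.card := g.sum_cycleType
    _ ≤ Fintype.card E := by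
        simpa using Finset.card_le_card (Finset.subset_univ g.support)

/-- Weighted sum of orbit counts over `Icc 1 (card E)`. -/
lemma sum_F_numOrbitsOfSize (g : Equiv.Perm E) (F : ℕ → ℕ) :
    ∑ i ∈ Finset.Icc 1 (Fintype.card E), F i * numOrbitsOfSize g i
      = F 1 * numFixed g + ∑ a ∈ g.cycleType.toFinset, F a * g.cycleType.count a := by
  classical
  rcases Nat.eq_zero_or_pos (Fintype.card E) with h0 | h0
  · have hfix : numFixed g = 0 := by
      have := numFixed_add_support g
      omega
    have hct : g.cycleType = 0 := by
      rw [Multiset.eq_zero_iff_forall_notMem]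
      intro a ha
      have := cycleType_toFinset_subset g (Multiset.mem_toFinset.mpr ha)
      rw [Finset.mem_Icc] at this
      omega
    rw [h0, hfix, hct]
    simp
  · have hins : Finset.Icc 1 (Fintype.card E)
        = insert 1 (Finset.Icc 2 (Fintype.card E)) := by
      ext i; simp [Finset.mem_Icc, Finset.mem_insert]; omega
    rw [hins, Finset.sum_insert (by simp [Finset.mem_Icc])]
    have h1 : F 1 * numOrbitsOfSize g 1 = F 1 * numFixed g := by
      simp [numOrbitsOfSize]
    rw [h1]
    have hc : ∀ i ∈ Finset.Icc 2 (Fintype.card E),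
        F i * numOrbitsOfSize g i = F i * g.cycleType.count i := by
      intro i hi
      rw [Finset.mem_Icc] at hi
      have hi1 : i ≠ 1 := by omega
      simp [numOrbitsOfSize, hi1]
    rw [Finset.sum_congr rfl hc]
    have := (Finset.sum_subset (cycleType_toFinset_subset g)
      (f := fun a => F a * g.cycleType.count a) (fun a _ ha => by
        rw [Multiset.mem_toFinset] at ha
        simp [Multiset.count_eq_zero_of_notMem ha])).symm
    rw [this]

end Aux

/-- Euler's formula for skeletons: a skeleton has genus zero if and only if
`3n_∘ + 4n_• + Σ_{i ≥ 1} (6 - i) n_i = 12`, where `n_•`, `n_∘` are the numbers of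
monovalent black and white vertices and `n_i` is the number of regions of width `i`. -/
theorem skeleton_genus_zero_iff (S : Skeleton) :
    S.GenusZero ↔
      (3 * (numFixed S.y : ℤ) + 4 * (numFixed S.x : ℤ) +
        ∑ i ∈ Finset.Icc 1 (Fintype.card S.E),
          (6 - (i : ℤ)) * (numOrbitsOfSize (S.x * S.y) i : ℤ)) = 12 := by
  classical
  set z := S.x * S.y with hzdef
  have hx := card_eq_of_pow_three S.hx
  have hy := card_eq_of_pow_two S.hy
  have hz1 : ∑ i ∈ Finset.Icc 1 (Fintype.card S.E), numOrbitsOfSize z i = numOrbits z := by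
    have := sum_F_numOrbitsOfSize z (fun _ => 1)
    simpa [numOrbits, Multiset.toFinset_sum_count_eq, add_comm] using this
  have hz2 : ∑ i ∈ Finset.Icc 1 (Fintype.card S.E), i * numOrbitsOfSize z i
      = Fintype.card S.E := by
    have h := sum_F_numOrbitsOfSize z id
    simp only [id] at h
    have h2 : ∑ a ∈ z.cycleType.toFinset, a * z.cycleType.count a = z.cycleType.sum := by
      rw [multiset_sum_eq_sum_count]
      exact Finset.sum_congr rfl (fun a _ => mul_comm _ _)
    rw [h, h2, z.sum_cycleType]
    simpa [mul_comm] using numFixed_add_support z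
  have hsum : (∑ i ∈ Finset.Icc 1 (Fintype.card S.E),
      (6 - (i : ℤ)) * (numOrbitsOfSize z i : ℤ))
      = 6 * (numOrbits z : ℤ) - (Fintype.card S.E : ℤ) := by
    have e1 : ∀ i ∈ Finset.Icc 1 (Fintype.card S.E),
        (6 - (i : ℤ)) * (numOrbitsOfSize z i : ℤ)
          = 6 * (numOrbitsOfSize z i : ℤ) - (i : ℤ) * (numOrbitsOfSize z i : ℤ) :=
      fun i _ => by ring
    have c1 : (∑ i ∈ Finset.Icc 1 (Fintype.card S.E), (numOrbitsOfSize z i : ℤ))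
        = (numOrbits z : ℤ) := by exact_mod_cast congrArg (Nat.cast : ℕ → ℤ) hz1
    have c2 : (∑ i ∈ Finset.Icc 1 (Fintype.card S.E),
        (i : ℤ) * (numOrbitsOfSize z i : ℤ)) = (Fintype.card S.E : ℤ) := by
      exact_mod_cast congrArg (Nat.cast : ℕ → ℤ) hz2
    rw [Finset.sum_congr rfl e1, Finset.sum_sub_distrib, ← Finset.mul_sum, c1, c2]
  rw [Skeleton.GenusZero, hsum]
  rw [← hzdef]
  unfold numOrbits
  omega
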